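/- Let G be a finite group and n ≥ 2. If a class [ω] ∈ H^n(G,U(1)) lies in Sha^n(G), i.e., the image of [ω] under the restriction map H^n(G,U(1)) → H^n(B,U(1)) is trivial for every abelian subgroup B ≤ G, then [ω] is untwisted: ∏_{σ ∈ S_n} ω(g_{σ(1)},…,g_{σ(n)})^{sgn(σ)} = 1 for every commuting n-tuple (g_1,…,g_n) ∈ X_n(G). Hence Sha^n(G) ⊆ Br^n(G). -/

import Mathlib

namespace DT

variable {G : Type*} [Group G] {A : Type*} [AddCommGroup A]

/-- Merge positions `i` and `i+1` of an `(n+1)`-tuple (bar-complex face map):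
for `j < i` entry `g j`, at `j = i` entry `g i * g (i+1)`, for `j > i` entry `g (j+1)`. -/
def barMerge {n : ℕ} (g : Fin (n+1) → G) (i : Fin n) : Fin n → G :=
  fun j => if (j : ℕ) < (i : ℕ) then g j.castSucc
    else if (j : ℕ) = (i : ℕ) then g j.castSucc * g j.succ
    else g j.succ

/-- The inhomogeneous (bar) coboundary of an `n`-cochain with values in a trivial module:
`(δω)(g_1,…,g_{n+1}) = ω(g_2,…,g_{n+1}) + Σ_{i=1}^{n} (−1)^i ω(g_1,…,g_i g_{i+1},…,g_{n+1})
 + (−1)^{n+1} ω(g_1,…,g_n)`. -/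
def coboundary {n : ℕ} (ω : (Fin n → G) → A) : (Fin (n+1) → G) → A :=
  fun g => ω (fun j => g j.succ)
    + ∑ i : Fin n, ((-1 : ℤ) ^ ((i : ℕ) + 1)) • ω (barMerge g i)
    + ((-1 : ℤ) ^ (n+1)) • ω (fun j => g j.castSucc)

/-- An `n`-cocycle. -/
def IsCocycle {n : ℕ} (ω : (Fin n → G) → A) : Prop := coboundary ω = 0

/-- An `(n+1)`-coboundary. -/
def IsCoboundary {n : ℕ} (ω : (Fin (n+1) → G) → A) : Prop := ∃ α, ω = coboundary α

/-- A commuting tuple. -/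
def IsCommTuple {n : ℕ} (g : Fin n → G) : Prop := ∀ i j, g i * g j = g j * g i

/-- The Dijkgraaf–Witten weight `W_ω(𝐠) = Σ_{σ ∈ S_n} sgn(σ) • ω(g_{σ(1)},…,g_{σ(n)})`. -/
def dwWeight {n : ℕ} (ω : (Fin n → G) → A) (g : Fin n → G) : A :=
  ∑ σ : Equiv.Perm (Fin n), ((Equiv.Perm.sign σ : ℤ)) • ω (g ∘ σ)

end DT

namespace DT

variable {G : Type*} [Group G]

/-- The inhomogeneous (bar) coboundary of a `U(1)`-valued `n`-cochain, written
multiplicatively. -/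
noncomputable def mcoboundary {n : ℕ} (ω : (Fin n → G) → Circle) : (Fin (n+1) → G) → Circle :=
  fun g => ω (fun j => g j.succ)
    * (∏ i : Fin n, ω (barMerge g i) ^ ((-1 : ℤ) ^ ((i : ℕ) + 1)))
    * ω (fun j => g j.castSucc) ^ ((-1 : ℤ) ^ (n+1))

/-- A `U(1)`-valued `n`-cocycle. -/
def IsMCocycle {n : ℕ} (ω : (Fin n → G) → Circle) : Prop := mcoboundary ω = 1

/-- A `U(1)`-valued `(n+1)`-coboundary. -/
def IsMCoboundary {n : ℕ} (ω : (Fin (n+1) → G) → Circle) : Prop := ∃ α, ω = mcoboundary α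

/-- The Dijkgraaf–Witten weight `W_ω(𝐠) = ∏_{σ ∈ S_n} ω(g_{σ(1)},…,g_{σ(n)})^{sgn(σ)}`. -/
noncomputable def mdwWeight {n : ℕ} (ω : (Fin n → G) → Circle) (g : Fin n → G) : Circle :=
  ∏ σ : Equiv.Perm (Fin n), ω (g ∘ σ) ^ ((Equiv.Perm.sign σ : ℤ))

end DT


namespace DT
variable {G : Type*} [Group G]

open Equiv

lemma castSucc_add_one' {n : ℕ} (j : Fin (n+1)) :
    (j.castSucc : Fin (n+2)) + 1 = j.succ := by
  apply Fin.ext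
  have h : (j.castSucc : Fin (n+2)) < Fin.last (n+1) := by
    rw [Fin.lt_def]
    simp
    exact Nat.le_of_lt_succ j.isLt
  rw [Fin.val_add_one_of_lt h]
  simp

lemma barMerge_mul_swap {n : ℕ} {g : Fin (n+2) → G} (hg : IsCommTuple g)
    (σ : Perm (Fin (n+2))) (i : Fin (n+1)) :
    barMerge (g ∘ (σ * Equiv.swap i.castSucc i.succ)) i = barMerge (g ∘ σ) i := by
  funext j
  simp only [barMerge, Function.comp, Perm.mul_apply]
  rcases lt_trichotomy (j : ℕ) (i : ℕ) with h | h | h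
  · rw [if_pos h, if_pos h]
    congr 2
    apply Equiv.swap_apply_of_ne_of_ne
    · intro hc; have := congrArg Fin.val hc; simp at this; omega
    · intro hc; have := congrArg Fin.val hc; simp at this; omega
  · have hj : j = i := Fin.ext h
    subst hj
    rw [if_neg (lt_irrefl _), if_pos rfl, if_neg (lt_irrefl _), if_pos rfl]
    rw [Equiv.swap_apply_left, Equiv.swap_apply_right]
    exact hg _ _
  · rw [if_neg (by omega), if_neg (by omega), if_neg (by omega), if_neg (by omega)]
    congr 2
    apply Equiv.swap_apply_of_ne_of_ne
    · intro hc; have := congrArg Fin.val hc; simp at this; omega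
    · intro hc; have := congrArg Fin.val hc; simp at this; omega

lemma mdw_mcoboundary {n : ℕ} (α : (Fin (n+1) → G) → Circle)
    {g : Fin (n+2) → G} (hg : IsCommTuple g) :
    mdwWeight (mcoboundary α) g = 1 := by
  classical
  unfold mdwWeight mcoboundary
  simp only [mul_zpow, Finset.prod_mul_distrib]
  have hM : ∏ σ : Perm (Fin (n+2)),
      (∏ i : Fin (n+1), α (barMerge (g ∘ σ) i) ^ ((-1:ℤ) ^ ((i:ℕ)+1)))
        ^ ((Perm.sign σ : ℤ)) = 1 := by
    have step : ∀ σ : Perm (Fin (n+2)),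
        (∏ i : Fin (n+1), α (barMerge (g ∘ σ) i) ^ ((-1:ℤ) ^ ((i:ℕ)+1)))
          ^ ((Perm.sign σ : ℤ))
        = ∏ i : Fin (n+1),
            (α (barMerge (g ∘ σ) i) ^ ((-1:ℤ) ^ ((i:ℕ)+1))) ^ ((Perm.sign σ : ℤ)) :=
      fun σ => (Finset.prod_zpow _ _ _).symm
    rw [Finset.prod_congr rfl fun σ _ => step σ, Finset.prod_comm]
    apply Finset.prod_eq_one
    intro i _
    have hne : (i.castSucc : Fin (n+2)) ≠ i.succ := by
      intro hc; have := congrArg Fin.val hc; simp at this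
    refine Finset.prod_ninvolution (fun σ => σ * Equiv.swap i.castSucc i.succ)
      (fun σ => ?_) (fun σ h => ?_) (fun σ => Finset.mem_univ _) (fun σ => ?_)
    · rw [barMerge_mul_swap hg σ i]
      have hsign : ((Perm.sign (σ * Equiv.swap i.castSucc i.succ) : ℤ))
          = -((Perm.sign σ : ℤ)) := by
        rw [map_mul, Perm.sign_swap hne]
        push_cast
        ring
      rw [hsign, ← zpow_add, add_neg_cancel, zpow_zero]
    · intro hc
      have h1 : σ * Equiv.swap i.castSucc i.succ = σ * 1 := by rw [mul_one]; exact hc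
      exact hne (Equiv.swap_eq_one_iff.mp (mul_left_cancel h1))
    · show σ * Equiv.swap i.castSucc i.succ * Equiv.swap i.castSucc i.succ = σ
      rw [mul_assoc, Equiv.swap_mul_self, mul_one]
  rw [mul_right_comm, hM, mul_one]
  have hre : (∏ σ : Perm (Fin (n+2)),
      (α (fun j => (g ∘ σ) j.castSucc) ^ ((-1:ℤ) ^ (n+1+1))) ^ ((Perm.sign σ : ℤ)))
      = ∏ σ : Perm (Fin (n+2)), (α fun j => (g ∘ σ) j.succ) ^ (-((Perm.sign σ : ℤ))) := by
    rw [← Equiv.prod_comp (Equiv.mulRight (finRotate (n+2)))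
      (fun σ : Perm (Fin (n+2)) =>
        (α (fun j => (g ∘ σ) j.castSucc) ^ ((-1:ℤ) ^ (n+1+1))) ^ ((Perm.sign σ : ℤ)))]
    apply Finset.prod_congr rfl
    intro σ _
    simp only [Equiv.coe_mulRight]
    have hbase : (fun j : Fin (n+1) => (g ∘ (σ * finRotate (n+2))) j.castSucc)
        = fun j => (g ∘ σ) j.succ := by
      funext j
      simp only [Function.comp, Perm.mul_apply, finRotate_succ_apply, castSucc_add_one']
    rw [hbase]
    have hsr : ((Perm.sign (σ * finRotate (n+2)) : ℤ))
        = ((Perm.sign σ : ℤ)) * (-1:ℤ)^(n+1) := by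
      rw [map_mul, sign_finRotate]
      push_cast
      ring
    rw [hsr, ← zpow_mul]
    congr 1
    have h2 : (-1:ℤ)^(n+1+1) * (-1:ℤ)^(n+1) = -1 := by
      rw [← pow_add]
      exact Odd.neg_one_pow ⟨n+1, by ring⟩
    calc (-1:ℤ)^(n+1+1) * (((Perm.sign σ : ℤ)) * (-1:ℤ)^(n+1))
        = ((-1:ℤ)^(n+1+1) * (-1:ℤ)^(n+1)) * ((Perm.sign σ : ℤ)) := by ring
      _ = -((Perm.sign σ : ℤ)) := by rw [h2]; ring
  rw [hre, ← Finset.prod_mul_distrib]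
  apply Finset.prod_eq_one
  intro σ _
  rw [← zpow_add, add_neg_cancel, zpow_zero]


lemma closure_range_comm {n : ℕ} {g : Fin n → G} (hg : IsCommTuple g) :
    ∀ a ∈ Subgroup.closure (Set.range g), ∀ b ∈ Subgroup.closure (Set.range g),
      a * b = b * a := by
  have h1 : Subgroup.closure (Set.range g) ≤ Subgroup.centralizer (Set.range g) := by
    rw [Subgroup.closure_le]
    rintro x ⟨i, rfl⟩
    rw [SetLike.mem_coe, Subgroup.mem_centralizer_iff]
    rintro y ⟨j, rfl⟩
    exact hg j i
  have h2 : Subgroup.closure (Set.range g)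
      ≤ Subgroup.centralizer ((Subgroup.closure (Set.range g) : Set G)) := by
    rw [Subgroup.closure_le]
    rintro x ⟨i, rfl⟩
    rw [SetLike.mem_coe, Subgroup.mem_centralizer_iff]
    intro y hy
    exact (Subgroup.mem_centralizer_iff.mp (h1 hy) (g i) ⟨i, rfl⟩).symm
  intro a ha b hb
  exact (Subgroup.mem_centralizer_iff.mp (h2 ha) b hb).symm


end DT

open DT in
/-- if the restriction of a class to every abelian subgroup is trivial,
then the class is untwisted: `Shaⁿ(G) ⊆ Brⁿ(G)`. -/
theorem stmt7 (G : Type*) [Group G] [Finite G] (m : ℕ)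
    (ω : (Fin (m+2) → G) → Circle) (hω : IsMCocycle ω)
    (hSha : ∀ B : Subgroup G, (∀ a ∈ B, ∀ b ∈ B, a * b = b * a) →
      IsMCoboundary (fun b : Fin (m+2) → B => ω (fun i => (b i : G)))) :
    ∀ g : Fin (m+2) → G, IsCommTuple g → mdwWeight ω g = 1 := by
  intro g hg
  classical
  obtain ⟨α, hα⟩ := hSha (Subgroup.closure (Set.range g)) (closure_range_comm hg)
  set b : Fin (m+2) → Subgroup.closure (Set.range g) :=
    fun i => ⟨g i, Subgroup.subset_closure (Set.mem_range_self i)⟩ with hbdef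
  have hb : IsCommTuple b := fun i j => Subtype.ext (hg i j)
  have key : mdwWeight ω g
      = mdwWeight (fun b' : Fin (m+2) → Subgroup.closure (Set.range g) =>
          ω fun i => ((b' i : G))) b := by
    unfold mdwWeight
    exact Finset.prod_congr rfl fun σ _ => rfl
  rw [key, hα]
  exact mdw_mcoboundary α hb
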